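/- arXiv:1706.01648 — 3 statements merged into one kernel-verified Lean document; each statement's English description precedes it below -/
import Mathlib

section
/- For every integer s with s ≥ 13 and s ≠ 15 and s ≠ 16, there exists an integer d with 4d - 3 ≤ s < d² such that d² - s is not a perfect square (equivalently, √(d² - s) is irrational). -/
theorem stmt_2 (s : ℤ) (hs : 13 ≤ s) (h15 : s ≠ 15) (h16 : s ≠ 16) :
    ∃ d : ℤ, 4 * d - 3 ≤ s ∧ s < d ^ 2 ∧
      (¬∃ k : ℤ, d ^ 2 - s = k ^ 2) ∧ Irrational (Real.sqrt ((d : ℝ) ^ 2 - (s : ℝ))) := by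
  obtain ⟨k, hk1, hk2, hk3⟩ : ∃ k : ℤ, 1 ≤ k ∧ 4 * k + 9 ≤ s ∧ s ≤ 6 * k + 8 :=
    ⟨(s - 9) / 4, by omega, by omega, by omega⟩
  refine ⟨k + 3, by omega, by nlinarith, ?_, ?_⟩
  · rintro ⟨m, hm⟩
    have h1 : k ^ 2 < m ^ 2 := by nlinarith
    have h2 : m ^ 2 < (k + 1) ^ 2 := by nlinarith
    have h3 : k < |m| := by
      nlinarith [abs_nonneg m, sq_abs m]
    have h4 : |m| < k + 1 := by
      nlinarith [abs_nonneg m, sq_abs m]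
    omega
  · have : ((k + 3 : ℤ) : ℝ) ^ 2 - (s : ℝ) = (((k + 3) ^ 2 - s : ℤ) : ℝ) := by push_cast; ring
    rw [this, irrational_sqrt_intCast_iff]
    constructor
    · rintro ⟨m, hm⟩
      have hm' : (k + 3) ^ 2 - s = m ^ 2 := by rw [hm]; ring
      have h3 : k < |m| := by
        nlinarith [abs_nonneg m, sq_abs m]
      have h4 : |m| < k + 1 := by
        nlinarith [abs_nonneg m, sq_abs m]
      omega
    · nlinarith
end

section
/- Fix an integer s ≥ 2 and work in ℤ^{s+2} with coordinates (d, m, m₁, …, mₛ). A vector F = (d, m, m₁, …, mₛ) satisfies m ≥ m₁ ≥ ⋯ ≥ mₛ ≥ 0 and d ≥ m + m₁ + m₂ if and only if F is a nonnegative integer linear combination of the vectors H₀ = (1,0,0,…,0), H₁ = (1,1,0,…,0), H₂ = (2,1,1,0,…,0), and H_k = (3,1,1,…,1,0,…,0) with k−1 ones among the last s+1 coordinates, for k = 3, …, s+1. -/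
/-- d-coefficient of the class `H_k`. -/
def Hd (k : ℕ) : ℤ := if k = 0 then 1 else if k = 1 then 1 else if k = 2 then 2 else 3

/-- coefficient of `m` (the `E`-multiplicity) of `H_k`. -/
def Hm (k : ℕ) : ℤ := if k = 0 then 0 else 1

/-- coefficient of `m_j` (the `E_j`-multiplicity, `1 ≤ j ≤ s`) of `H_k`:
for `k ≥ 2`, `H_k` involves `E_1, …, E_{k-1}`. -/
def Hmi (k j : ℕ) : ℤ := if 1 ≤ j ∧ j + 1 ≤ k then 1 else 0

/-- tail sum of the coefficients, starting at index `j`. -/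
def Tsum (s : ℕ) (cc : ℕ → ℤ) (j : ℕ) : ℤ :=
  ∑ k : Fin (s + 2), if j ≤ (k : ℕ) then cc k else 0

lemma Tsum_step (s : ℕ) (cc : ℕ → ℤ) (j : ℕ) (hj : j < s + 2) :
    Tsum s cc j = cc j + Tsum s cc (j + 1) := by
  unfold Tsum
  have : ∀ k : Fin (s + 2),
      (if j ≤ (k : ℕ) then cc k else 0)
        = (if (k : ℕ) = j then cc k else 0) + (if j + 1 ≤ (k : ℕ) then cc k else 0) := by
    intro k
    split_ifs <;> omega
  rw [Finset.sum_congr rfl (fun k _ => this k), Finset.sum_add_distrib]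
  congr 1
  have : ∀ k : Fin (s + 2),
      (if (k : ℕ) = j then cc (k : ℕ) else 0)
        = (if k = (⟨j, hj⟩ : Fin (s + 2)) then cc (k : ℕ) else 0) := by
    intro k
    simp [Fin.ext_iff]
  rw [Finset.sum_congr rfl (fun k _ => this k), Finset.sum_ite_eq' Finset.univ]
  simp

lemma Tsum_top (s : ℕ) (cc : ℕ → ℤ) (j : ℕ) (hj : s + 2 ≤ j) :
    Tsum s cc j = 0 := by
  unfold Tsum
  apply Finset.sum_eq_zero
  intro k _
  rw [if_neg]
  have := k.isLt
  omega

lemma Tsum_nonneg (s : ℕ) (cc : ℕ → ℤ) (hcc : ∀ k, 0 ≤ cc k) (j : ℕ) :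
    0 ≤ Tsum s cc j := by
  apply Finset.sum_nonneg
  intro k _
  split_ifs
  · exact hcc _
  · exact le_rfl

lemma Tsum_anti (s : ℕ) (cc : ℕ → ℤ) (hcc : ∀ k, 0 ≤ cc k) {a b : ℕ} (hab : a ≤ b) :
    Tsum s cc b ≤ Tsum s cc a := by
  apply Finset.sum_le_sum
  intro k _
  split_ifs <;> first | exact le_rfl | omega | exact hcc _

lemma sum_Hd (s : ℕ) (cc : ℕ → ℤ) :
    ∑ k : Fin (s + 2), cc k * Hd k = Tsum s cc 0 + Tsum s cc 2 + Tsum s cc 3 := by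
  unfold Tsum
  rw [← Finset.sum_add_distrib, ← Finset.sum_add_distrib]
  apply Finset.sum_congr rfl
  intro k _
  unfold Hd
  split_ifs <;> omega

lemma sum_Hm (s : ℕ) (cc : ℕ → ℤ) :
    ∑ k : Fin (s + 2), cc k * Hm k = Tsum s cc 1 := by
  unfold Tsum
  apply Finset.sum_congr rfl
  intro k _
  unfold Hm
  split_ifs <;> omega

lemma sum_Hmi (s : ℕ) (cc : ℕ → ℤ) (j : ℕ) :
    ∑ k : Fin (s + 2), cc k * Hmi k (j + 1) = Tsum s cc (j + 2) := by
  unfold Tsum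
  apply Finset.sum_congr rfl
  intro k _
  unfold Hmi
  split_ifs <;> omega

theorem stmt_10 (s : ℕ) (hs : 2 ≤ s) (d m : ℤ) (mm : Fin s → ℤ) :
    ((∀ i j : Fin s, i ≤ j → mm j ≤ mm i) ∧ (∀ i : Fin s, 0 ≤ mm i) ∧
      (∀ i : Fin s, mm i ≤ m) ∧
      d ≥ m + mm ⟨0, by omega⟩ + mm ⟨1, by omega⟩) ↔
    ∃ c : Fin (s + 2) → ℕ,
      d = ∑ k : Fin (s + 2), (c k : ℤ) * Hd k ∧
      m = ∑ k : Fin (s + 2), (c k : ℤ) * Hm k ∧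
      ∀ j : Fin s, mm j = ∑ k : Fin (s + 2), (c k : ℤ) * Hmi k (j + 1) := by
  have h0s : 0 < s := by omega
  have h1s : 1 < s := by omega
  constructor
  · rintro ⟨h1, h2, h3, h4⟩
    set g : ℕ → ℤ := fun j => if h : j < s then mm ⟨j, h⟩ else 0 with hg
    have g_nonneg : ∀ j, 0 ≤ g j := by
      intro j
      simp only [hg]
      split_ifs with h
      · exact h2 _
      · exact le_rfl
    have g_anti : ∀ j1 j2 : ℕ, j1 ≤ j2 → g j2 ≤ g j1 := by
      intro j1 j2 hle
      simp only [hg]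
      split_ifs with ha hb hb
      · exact h1 ⟨j1, hb⟩ ⟨j2, ha⟩ hle
      · exfalso; omega
      · exact h2 _
      · exact le_rfl
    have hg0 : g 0 = mm ⟨0, h0s⟩ := by simp only [hg]; rw [dif_pos h0s]
    have hg1 : g 1 = mm ⟨1, h1s⟩ := by simp only [hg]; rw [dif_pos h1s]
    set cc : ℕ → ℤ := fun k =>
      if k = 0 then d - (m + g 0 + g 1) else if k = 1 then m - g 0 else g (k - 2) - g (k - 1)
      with hcc
    have h4' : d ≥ m + g 0 + g 1 := by rw [hg0, hg1]; exact h4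
    have cc_nonneg : ∀ k, 0 ≤ cc k := by
      intro k
      simp only [hcc]
      split_ifs with hk0 hk1
      · omega
      · have := h3 ⟨0, h0s⟩
        rw [hg0]; omega
      · have := g_anti (k - 2) (k - 1) (by omega)
        omega
    have Tsum_g : ∀ i j : ℕ, i + j = s → Tsum s cc (j + 2) = g j := by
      intro i
      induction i with
      | zero =>
        intro j hj
        have hjs : j = s := by omega
        rw [hjs, Tsum_top s cc (s + 2) le_rfl]
        simp only [hg]
        rw [dif_neg (by omega)]
      | succ i ih =>
        intro j hj
        rw [Tsum_step s cc (j + 2) (by omega)]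
        have e : j + 2 + 1 = j + 1 + 2 := by omega
        rw [e, ih (j + 1) (by omega)]
        have hcc2 : cc (j + 2) = g j - g (j + 1) := by
          simp only [hcc]
          rw [if_neg (by omega), if_neg (by omega)]
          norm_num
        rw [hcc2]; ring
    have hT2 : ∀ j : ℕ, j ≤ s → Tsum s cc (j + 2) = g j := fun j hj =>
      Tsum_g (s - j) j (by omega)
    have hTsum2 : Tsum s cc 2 = g 0 := by
      have := hT2 0 (by omega); norm_num at this; exact this
    have hTsum3 : Tsum s cc 3 = g 1 := by
      have := hT2 1 (by omega); norm_num at this; exact this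
    have hTsum1 : Tsum s cc 1 = m := by
      rw [Tsum_step s cc 1 (by omega)]
      norm_num [hTsum2]
      simp only [hcc]
      norm_num
    have hTsum0 : Tsum s cc 0 = d - g 0 - g 1 := by
      rw [Tsum_step s cc 0 (by omega)]
      norm_num [hTsum1]
      simp only [hcc]
      norm_num
      ring
    refine ⟨fun k => (cc (k : ℕ)).toNat, ?_, ?_, ?_⟩
    · have hcast : ∀ k : Fin (s + 2), ((cc (k : ℕ)).toNat : ℤ) * Hd k = cc (k : ℕ) * Hd k := by
        intro k; rw [Int.toNat_of_nonneg (cc_nonneg _)]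
      rw [Finset.sum_congr rfl (fun k _ => hcast k), sum_Hd, hTsum0, hTsum2, hTsum3]
      ring
    · have hcast : ∀ k : Fin (s + 2), ((cc (k : ℕ)).toNat : ℤ) * Hm k = cc (k : ℕ) * Hm k := by
        intro k; rw [Int.toNat_of_nonneg (cc_nonneg _)]
      rw [Finset.sum_congr rfl (fun k _ => hcast k), sum_Hm, hTsum1]
    · intro j
      have hcast : ∀ k : Fin (s + 2),
          ((cc (k : ℕ)).toNat : ℤ) * Hmi k ((j : ℕ) + 1) = cc (k : ℕ) * Hmi k ((j : ℕ) + 1) := by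
        intro k; rw [Int.toNat_of_nonneg (cc_nonneg _)]
      rw [Finset.sum_congr rfl (fun k _ => hcast k), sum_Hmi, hT2 (j : ℕ) (le_of_lt j.isLt)]
      simp only [hg]
      rw [dif_pos j.isLt]
  · rintro ⟨c, hd, hm, hmm⟩
    set cc : ℕ → ℤ := fun k => if h : k < s + 2 then (c ⟨k, h⟩ : ℤ) else 0 with hcc
    have cc_nonneg : ∀ k, 0 ≤ cc k := by
      intro k
      simp only [hcc]
      split_ifs
      · positivity
      · exact le_rfl
    have hconv : ∀ (f : ℕ → ℤ), ∑ k : Fin (s + 2), (c k : ℤ) * f k = ∑ k : Fin (s + 2), cc k * f k := by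
      intro f
      apply Finset.sum_congr rfl
      intro k _
      simp only [hcc]
      rw [dif_pos k.isLt]
    have hd' : d = Tsum s cc 0 + Tsum s cc 2 + Tsum s cc 3 := by
      rw [hd, hconv (fun k => Hd k), sum_Hd]
    have hm' : m = Tsum s cc 1 := by
      rw [hm, hconv (fun k => Hm k), sum_Hm]
    have hmm' : ∀ j : Fin s, mm j = Tsum s cc ((j : ℕ) + 2) := by
      intro j
      rw [hmm j, hconv (fun k => Hmi k ((j : ℕ) + 1)), sum_Hmi]
    refine ⟨?_, ?_, ?_, ?_⟩
    · intro i j hij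
      rw [hmm' i, hmm' j]
      have hij' : (i : ℕ) ≤ (j : ℕ) := hij
      exact Tsum_anti s cc cc_nonneg (by omega)
    · intro i
      rw [hmm' i]
      exact Tsum_nonneg s cc cc_nonneg _
    · intro i
      rw [hmm' i, hm']
      exact Tsum_anti s cc cc_nonneg (by omega)
    · have e0 : mm ⟨0, h0s⟩ = Tsum s cc 2 := hmm' ⟨0, h0s⟩
      have e1 : mm ⟨1, h1s⟩ = Tsum s cc 3 := hmm' ⟨1, h1s⟩
      rw [hd', hm', e0, e1]
      have h01 := Tsum_anti s cc cc_nonneg (by omega : (0:ℕ) ≤ 1)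
      linarith
end

section
/- Let s ≥ 2. Let a, b, b₁, …, bₛ be integers with a ≥ 0, b ≥ 0, bᵢ ≥ 0 for all i, a² + 1 = b² + b₁² + ⋯ + bₛ² and b + b₁ + ⋯ + bₛ = 3a − 1. Let d, m, m₁, …, mₛ be real numbers with m ≥ m₁ ≥ ⋯ ≥ mₛ ≥ 0 and d ≥ m + m₁ + m₂. Then da − mb − m₁b₁ − ⋯ − mₛbₛ ≥ 0. -/
theorem stmt_14 (s : ℕ) (hs : 2 ≤ s) (a b : ℤ) (bb : Fin s → ℤ)
    (ha : 0 ≤ a) (hb : 0 ≤ b) (hbb : ∀ i, 0 ≤ bb i)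
    (h1 : a ^ 2 + 1 = b ^ 2 + ∑ i, (bb i) ^ 2)
    (h2 : b + ∑ i, bb i = 3 * a - 1)
    (d m : ℝ) (mm : Fin s → ℝ)
    (hmono : ∀ i j : Fin s, i ≤ j → mm j ≤ mm i)
    (hnonneg : ∀ i, 0 ≤ mm i)
    (hm : ∀ i, mm i ≤ m)
    (hd : d ≥ m + mm ⟨0, by omega⟩ + mm ⟨1, by omega⟩) :
    d * (a : ℝ) - m * (b : ℝ) - ∑ i, mm i * (bb i : ℝ) ≥ 0 := by
  obtain ⟨k, rfl⟩ : ∃ k, s = k + 2 := ⟨s - 2, by omega⟩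
  -- a ≥ 1
  have hsum_nonneg : (0 : ℤ) ≤ ∑ i, bb i := Finset.sum_nonneg fun i _ => hbb i
  have ha1 : 1 ≤ a := by omega
  -- squares sum nonneg, each square ≤ a^2+1
  have hsq : ∀ i : Fin (k + 2), bb i ^ 2 ≤ a ^ 2 + 1 := by
    intro i
    have h := Finset.single_le_sum (f := fun i => bb i ^ 2)
      (fun j _ => sq_nonneg (bb j)) (Finset.mem_univ i)
    have hb2 := sq_nonneg b
    omega
  have hba : b ≤ a := by
    have hsq' : (0 : ℤ) ≤ ∑ i, bb i ^ 2 :=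
      Finset.sum_nonneg fun i _ => sq_nonneg (bb i)
    nlinarith [sq_nonneg (b - a)]
  have hbba : ∀ i, bb i ≤ a := by
    intro i
    have := hsq i
    nlinarith [sq_nonneg (bb i - a), hbb i]
  -- split the sums at indices 0
  rw [Fin.sum_univ_succ] at h2 ⊢
  set mm1 : ℝ := mm ⟨1, by omega⟩ with hmm1
  have htail : ∑ i : Fin (k + 1), mm i.succ * (bb i.succ : ℝ)
      ≤ mm1 * ∑ i : Fin (k + 1), (bb i.succ : ℝ) := by
    rw [Finset.mul_sum]
    apply Finset.sum_le_sum
    intro i _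
    have h1' : mm i.succ ≤ mm1 := by
      apply hmono
      show (1 : ℕ) ≤ _
      simp [Fin.succ]
    have h2' : (0 : ℝ) ≤ (bb i.succ : ℝ) := by exact_mod_cast hbb i.succ
    exact mul_le_mul_of_nonneg_right h1' h2'
  have htsum : ∑ i : Fin (k + 1), (bb i.succ : ℝ) = 3 * a - 1 - b - bb 0 := by
    have hz : ∑ i : Fin (k + 1), bb i.succ = 3 * a - 1 - b - bb 0 := by omega
    have := congrArg (fun z : ℤ => (z : ℝ)) hz
    push_cast at this
    convert this using 2
  rw [htsum] at htail
  have hm0 : mm1 ≤ mm ⟨0, by omega⟩ := by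
    apply hmono
    show (0 : ℕ) ≤ _
    omega
  have hm1m : mm1 ≤ m := hm _
  have h1nn : (0 : ℝ) ≤ mm1 := hnonneg _
  have hbar : (b : ℝ) ≤ a := by exact_mod_cast hba
  have hbbar : (bb 0 : ℝ) ≤ a := by exact_mod_cast hbba 0
  have hbr : (0 : ℝ) ≤ b := by exact_mod_cast hb
  have hbb0r : (0 : ℝ) ≤ (bb 0 : ℝ) := by exact_mod_cast hbb 0
  have har : (1 : ℝ) ≤ a := by exact_mod_cast ha1
  have h0nn : (0 : ℝ) ≤ mm ⟨0, by omega⟩ := hnonneg _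
  have hm0m : mm ⟨0, by omega⟩ ≤ m := hm _
  have h00 : mm (0 : Fin (k + 2)) = mm ⟨0, by omega⟩ := rfl
  rw [h00]
  nlinarith [mul_le_mul_of_nonneg_left hbar (sub_nonneg.2 hm1m),
    mul_le_mul_of_nonneg_left hbbar (sub_nonneg.2 hm0),
    mul_le_mul_of_nonneg_right (sub_nonneg.2 hd) (le_trans zero_le_one har)]
end
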